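/- Let m be even, n ∈ ℕ, and s ≥ 1 an integer. Then there exists a constant c > 0 (depending only on m, n, s) such that for any x^1, ..., x^s ∈ ℝ^n, c · ‖Σ_{j=1}^s (x^j)^{*m}‖ ≥ max_{1≤j≤s} ‖x^j‖^m. -/

import Mathlib

/-- The `m`-fold self-convolution of `x ∈ ℝ^n`. -/
noncomputable def convPow (n m : ℕ) (x : Fin n → ℝ) : Fin ((n - 1) * m + 1) → ℝ :=
  fun i => ∑ f : Fin m → Fin n, if (∑ j, (f j : ℕ)) = (i : ℕ) then ∏ j, x (f j) else 0

/-- The Euclidean norm on `ℝ^N`. -/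
noncomputable def enorm {N : ℕ} (z : Fin N → ℝ) : ℝ := Real.sqrt (∑ i, z i ^ 2)

lemma enorm_nonneg' {N : ℕ} (z : Fin N → ℝ) : 0 ≤ _root_.enorm z := Real.sqrt_nonneg _

lemma enorm_eq_zero_iff {N : ℕ} (z : Fin N → ℝ) : _root_.enorm z = 0 ↔ z = 0 := by
  unfold _root_.enorm
  rw [Real.sqrt_eq_zero (by positivity)]
  constructor
  · intro h
    funext i
    have := (Finset.sum_eq_zero_iff_of_nonneg (fun i _ => sq_nonneg (z i))).1 h i (Finset.mem_univ i)
    exact pow_eq_zero_iff (two_ne_zero) |>.1 this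
  · intro h; simp [h]

lemma enorm_smul' {N : ℕ} (r : ℝ) (z : Fin N → ℝ) : _root_.enorm (r • z) = |r| * _root_.enorm z := by
  unfold _root_.enorm
  have : ∑ i, (r • z) i ^ 2 = r ^ 2 * ∑ i, z i ^ 2 := by
    rw [Finset.mul_sum]; apply Finset.sum_congr rfl; intro i _; simp [mul_pow]
  rw [this, Real.sqrt_mul (sq_nonneg r), Real.sqrt_sq_eq_abs]

lemma convPow_smul (n m : ℕ) (r : ℝ) (x : Fin n → ℝ) :
    convPow n m (r • x) = (r ^ m) • convPow n m x := by
  funext i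
  simp only [convPow, Pi.smul_apply, smul_eq_mul]
  rw [Finset.mul_sum]
  apply Finset.sum_congr rfl
  intro f _
  rw [mul_ite, mul_zero]
  congr 1
  rw [Finset.prod_mul_distrib, Finset.prod_const, Finset.card_univ, Fintype.card_fin]

lemma degree_bound {n m : ℕ} (f : Fin m → Fin n) : (∑ j, (f j : ℕ)) < (n - 1) * m + 1 := by
  have : ∑ j, (f j : ℕ) ≤ ∑ _j : Fin m, (n - 1) := by
    apply Finset.sum_le_sum
    intro j _
    exact Nat.le_pred_of_lt (f j).isLt
  simp only [Finset.sum_const, Finset.card_univ, Fintype.card_fin, smul_eq_mul] at this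
  exact Nat.lt_succ_of_le (by rw [Nat.mul_comm]; exact this)

lemma convPow_eval (n m : ℕ) (x : Fin n → ℝ) (t : ℝ) :
    (∑ k, x k * t ^ (k : ℕ)) ^ m = ∑ i : Fin ((n - 1) * m + 1), convPow n m x i * t ^ (i : ℕ) := by
  have hL : (∑ k, x k * t ^ (k : ℕ)) ^ m
      = ∑ f : Fin m → Fin n, (∏ j, x (f j)) * t ^ (∑ j, (f j : ℕ)) := by
    calc (∑ k, x k * t ^ (k : ℕ)) ^ m
        = ∏ _j : Fin m, (∑ k, x k * t ^ (k : ℕ)) := by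
          rw [Finset.prod_const, Finset.card_univ, Fintype.card_fin]
      _ = ∑ f ∈ Fintype.piFinset (fun _ : Fin m => (Finset.univ : Finset (Fin n))),
            ∏ j, x (f j) * t ^ ((f j : ℕ)) := Finset.prod_univ_sum _ _
      _ = ∑ f : Fin m → Fin n, (∏ j, x (f j)) * t ^ (∑ j, (f j : ℕ)) := by
          rw [Fintype.piFinset_univ]
          apply Finset.sum_congr rfl
          intro f _
          rw [Finset.prod_mul_distrib, Finset.prod_pow_eq_pow_sum]
  rw [hL]
  unfold convPow
  have hR : ∀ i : Fin ((n - 1) * m + 1),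
      (∑ f : Fin m → Fin n, if (∑ j, (f j : ℕ)) = (i : ℕ) then ∏ j, x (f j) else 0) * t ^ (i : ℕ)
      = ∑ f : Fin m → Fin n,
          (if (∑ j, (f j : ℕ)) = (i : ℕ) then (∏ j, x (f j)) * t ^ (i : ℕ) else 0) := by
    intro i
    rw [Finset.sum_mul]
    apply Finset.sum_congr rfl
    intro f _
    rw [ite_mul, zero_mul]
  simp only [hR]
  rw [Finset.sum_comm]
  apply Finset.sum_congr rfl
  intro f _
  rw [Finset.sum_eq_single (⟨∑ j, (f j : ℕ), degree_bound f⟩ : Fin ((n - 1) * m + 1))]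
  · simp
  · intro i _ hne
    rw [if_neg]
    intro h
    exact hne (Fin.ext h.symm)
  · intro h
    exact absurd (Finset.mem_univ _) h

lemma eq_zero_of_sum_convPow (n m s : ℕ) (hm : Even m) (hm0 : m ≠ 0)
    (x : Fin s → Fin n → ℝ) (h : ∑ j', convPow n m (x j') = 0) : ∀ j, x j = 0 := by
  have hev : ∀ t : ℝ, ∀ j : Fin s, (∑ k, x j k * t ^ (k : ℕ)) = 0 := by
    intro t j
    have hsum : ∑ j' : Fin s, (∑ k, x j' k * t ^ (k : ℕ)) ^ m = 0 := by
      have : ∑ j' : Fin s, (∑ k, x j' k * t ^ (k : ℕ)) ^ m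
          = ∑ i : Fin ((n - 1) * m + 1), (∑ j', convPow n m (x j')) i * t ^ (i : ℕ) := by
        simp only [convPow_eval]
        rw [Finset.sum_comm]
        apply Finset.sum_congr rfl
        intro i _
        simp [Finset.sum_apply, Finset.sum_mul]
      rw [this, h]
      simp
    have hterm := (Finset.sum_eq_zero_iff_of_nonneg
      (fun j' _ => hm.pow_nonneg (∑ k, x j' k * t ^ (k : ℕ)))).1 hsum j (Finset.mem_univ j)
    exact pow_eq_zero_iff hm0 |>.1 hterm
  intro j
  set p : Polynomial ℝ := ∑ k : Fin n, Polynomial.C (x j k) * Polynomial.X ^ (k : ℕ) with hp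
  have hpe : ∀ t : ℝ, p.eval t = ∑ k, x j k * t ^ (k : ℕ) := by
    intro t
    rw [hp, Polynomial.eval_finset_sum]
    simp
  have hp0 : p = 0 := by
    apply Polynomial.funext
    intro t
    rw [hpe, hev t j, Polynomial.eval_zero]
  funext k
  have : p.coeff (k : ℕ) = x j k := by
    rw [hp, Polynomial.finset_sum_coeff]
    rw [Finset.sum_eq_single k]
    · simp
    · intro k' _ hne
      simp only [Polynomial.coeff_C_mul, Polynomial.coeff_X_pow]
      rw [if_neg (fun hh => hne (Fin.ext hh.symm)), mul_zero]
    · intro hk; exact absurd (Finset.mem_univ _) hk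
  rw [hp0] at this
  simpa using this.symm

set_option maxHeartbeats 1000000 in
/-- For even `m` and `s ≥ 1` there is `c > 0` (depending only on `m, n, s`) such that
`c ⬝ ‖∑_j (x^j)^{*m}‖ ≥ max_j ‖x^j‖^m` for all `x^1, …, x^s ∈ ℝ^n`. -/
theorem convPow_sum_coercive_many (n m s : ℕ) (hm : Even m) (hs : 1 ≤ s) :
    ∃ c : ℝ, 0 < c ∧ ∀ x : Fin s → (Fin n → ℝ), ∀ j : Fin s,
      _root_.enorm (x j) ^ m ≤ c * _root_.enorm (∑ j', convPow n m (x j')) := by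
  rcases Nat.eq_zero_or_pos m with hm0 | hm0
  · -- m = 0
    subst hm0
    refine ⟨1, one_pos, fun x j => ?_⟩
    have hcp : ∀ y : Fin n → ℝ, convPow n 0 y = fun _ => 1 := by
      intro y
      funext i
      have hi : (i : ℕ) = 0 := by have := i.isLt; omega
      simp [convPow, hi]
    simp only [hcp, pow_zero, one_mul]
    have : (∑ _j' : Fin s, (fun _ : Fin ((n-1)*0+1) => (1:ℝ))) = fun _ => (s : ℝ) := by
      funext i; simp
    rw [this]
    unfold _root_.enorm
    have : ∑ i : Fin ((n-1)*0+1), ((s:ℝ)) ^ 2 = ((n-1)*0+1 : ℕ) * (s:ℝ)^2 := by simp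
    rw [this]
    have h1 : (1:ℝ) ≤ (((n-1)*0+1 : ℕ) : ℝ) * (s:ℝ)^2 := by
      have hs' : (1:ℝ) ≤ (s:ℝ) := by exact_mod_cast hs
      have hc : (((n-1)*0+1 : ℕ) : ℝ) = 1 := by norm_num
      nlinarith
    calc (1:ℝ) = Real.sqrt 1 := (Real.sqrt_one).symm
      _ ≤ _ := Real.sqrt_le_sqrt h1
  rcases Nat.eq_zero_or_pos n with hn0 | hn0
  · -- n = 0
    subst hn0
    refine ⟨1, one_pos, fun x j => ?_⟩
    have : _root_.enorm (x j) = 0 := by unfold _root_.enorm; simp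
    rw [this, zero_pow (by omega : m ≠ 0), one_mul]
    exact enorm_nonneg' _
  -- main case: m > 0, n > 0
  have hmne : m ≠ 0 := hm0.ne'
  set E := Fin s → Fin n → ℝ
  set g : E → ℝ := fun x => _root_.enorm (∑ j', convPow n m (x j')) with hg
  have gcont : Continuous g := by
    apply Real.continuous_sqrt.comp
    apply continuous_finset_sum
    intro i _
    apply Continuous.pow
    apply Continuous.comp (continuous_apply i)
    apply continuous_finset_sum
    intro j' _
    apply continuous_pi
    intro i'
    unfold convPow
    apply continuous_finset_sum
    intro f _
    split_ifs
    · exact continuous_finset_prod _ fun j _ => (continuous_apply (f j)).comp (continuous_apply j')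
    · exact continuous_const
  -- the sphere
  have hne : Nonempty (Fin n) := ⟨⟨0, hn0⟩⟩
  have hse : Nonempty (Fin s) := ⟨⟨0, hs⟩⟩
  have hx1 : ‖(fun _ _ => 1 : E)‖ = 1 := by
    rw [pi_norm_const, pi_norm_const, norm_one]
  have hsne : (Metric.sphere (0 : E) 1).Nonempty :=
    ⟨(fun _ _ => 1 : E), by rwa [mem_sphere_zero_iff_norm]⟩
  obtain ⟨x0, hx0S, hmin⟩ := (isCompact_sphere (0 : E) 1).exists_isMinOn hsne gcont.continuousOn
  set δ := g x0 with hδ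
  have hx0n : ‖x0‖ = 1 := mem_sphere_zero_iff_norm.1 hx0S
  have hδpos : 0 < δ := by
    rcases lt_or_eq_of_le (enorm_nonneg' (∑ j', convPow n m (x0 j'))) with h | h
    · exact h
    · exfalso
      have hz : ∑ j', convPow n m (x0 j') = 0 := (enorm_eq_zero_iff _).1 h.symm
      have := eq_zero_of_sum_convPow n m s hm hmne x0 hz
      have : x0 = 0 := funext this
      rw [this, norm_zero] at hx0n
      exact one_ne_zero hx0n.symm
  have hδle : ∀ y : E, ‖y‖ = 1 → δ ≤ g y := by
    intro y hy
    exact hmin (mem_sphere_zero_iff_norm.2 hy)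
  -- the constant
  refine ⟨Real.sqrt n ^ m / δ, div_pos (by positivity) hδpos, fun x j => ?_⟩
  rcases eq_or_ne x 0 with hx | hx
  · subst hx
    have : _root_.enorm ((0 : E) j) = 0 := (enorm_eq_zero_iff _).2 rfl
    rw [this, zero_pow hmne]
    exact mul_nonneg (div_nonneg (by positivity) hδpos.le) (enorm_nonneg' _)
  · have hr : 0 < ‖x‖ := norm_pos_iff.2 hx
    set r := ‖x‖ with hrdef
    set y : E := r⁻¹ • x with hy
    have hyn : ‖y‖ = 1 := by
      rw [hy, norm_smul, norm_inv, norm_norm, ← hrdef, inv_mul_cancel₀ hr.ne']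
    have hxy : x = r • y := by
      rw [hy, smul_smul, mul_inv_cancel₀ hr.ne', one_smul]
    have hgx : g x = r ^ m * g y := by
      have h1 : ∀ j', convPow n m (x j') = r ^ m • convPow n m (y j') := by
        intro j'
        have : x j' = r • y j' := by rw [hxy]; rfl
        rw [this]
        exact convPow_smul n m r (y j')
      show _root_.enorm (∑ j', convPow n m (x j')) = r ^ m * _root_.enorm (∑ j', convPow n m (y j'))
      simp only [h1]
      rw [← Finset.smul_sum, enorm_smul', abs_of_nonneg (by positivity)]
    have hgy : δ ≤ g y := hδle y hyn
    have hrm : r ^ m * δ ≤ g x := by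
      rw [hgx]
      exact mul_le_mul_of_nonneg_left hgy (by positivity)
    have hb : _root_.enorm (x j) ≤ Real.sqrt n * r := by
      unfold _root_.enorm
      have h2 : ∑ i, x j i ^ 2 ≤ (n : ℝ) * r ^ 2 := by
        calc ∑ i, x j i ^ 2 ≤ ∑ _i : Fin n, r ^ 2 := by
              apply Finset.sum_le_sum
              intro i _
              have h3 : |x j i| ≤ r := by
                calc |x j i| = ‖x j i‖ := (Real.norm_eq_abs _).symm
                  _ ≤ ‖x j‖ := norm_le_pi_norm (x j) i
                  _ ≤ ‖x‖ := norm_le_pi_norm x j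
              calc x j i ^ 2 = |x j i| ^ 2 := (sq_abs _).symm
                _ ≤ r ^ 2 := by apply pow_le_pow_left₀ (abs_nonneg _) h3
          _ = (n : ℝ) * r ^ 2 := by
              rw [Finset.sum_const, Finset.card_univ, Fintype.card_fin, nsmul_eq_mul]
      calc Real.sqrt (∑ i, x j i ^ 2) ≤ Real.sqrt ((n : ℝ) * r ^ 2) := Real.sqrt_le_sqrt h2
        _ = Real.sqrt n * r := by
            rw [Real.sqrt_mul (Nat.cast_nonneg n), Real.sqrt_sq hr.le]
    calc _root_.enorm (x j) ^ m ≤ (Real.sqrt n * r) ^ m :=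
          pow_le_pow_left₀ (enorm_nonneg' _) hb m
      _ = Real.sqrt n ^ m * r ^ m := mul_pow _ _ _
      _ ≤ Real.sqrt n ^ m * (g x / δ) := by
          apply mul_le_mul_of_nonneg_left _ (by positivity)
          rw [le_div_iff₀ hδpos]
          linarith [hrm]
      _ = Real.sqrt n ^ m / δ * g x := by ring
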